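/- Let −1 ≤ a < b < 1 with a + b < 0, let d ≥ 1, and set γ = (2 − a − b)/(b − a). Suppose γ² > d + 1. If v_1, …, v_n are unit vectors in ℝ^d such that ⟨v_i, v_j⟩ ∈ {a, b} for all i ≠ j, then n ≤ (d+1)·(γ² − 1)/(γ² − (d+1)). -/

import Mathlib

open Finset

lemma swap_sum (n D : ℕ) (f : Fin n → Fin D → ℝ) :
    ∑ i, ∑ j, (∑ k, f i k * f j k)^2 = ∑ k, ∑ l, (∑ i, f i k * f i l)^2 := by
  simp_rw [sq, Finset.sum_mul_sum]
  calc ∑ i, ∑ j, ∑ k, ∑ l, (f i k * f j k) * (f i l * f j l)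
      = ∑ i, ∑ k, ∑ j, ∑ l, (f i k * f j k) * (f i l * f j l) :=
        Finset.sum_congr rfl fun i _ => Finset.sum_comm
    _ = ∑ k, ∑ i, ∑ j, ∑ l, (f i k * f j k) * (f i l * f j l) := Finset.sum_comm
    _ = ∑ k, ∑ i, ∑ l, ∑ j, (f i k * f j k) * (f i l * f j l) :=
        Finset.sum_congr rfl fun k _ => Finset.sum_congr rfl fun i _ => Finset.sum_comm
    _ = ∑ k, ∑ l, ∑ i, ∑ j, (f i k * f j k) * (f i l * f j l) :=
        Finset.sum_congr rfl fun k _ => Finset.sum_comm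
    _ = ∑ k, ∑ l, ∑ i, ∑ j, (f i k * f i l) * (f j k * f j l) := by
        refine Finset.sum_congr rfl fun k _ => Finset.sum_congr rfl fun l _ =>
          Finset.sum_congr rfl fun i _ => Finset.sum_congr rfl fun j _ => by ring

lemma frame_bound (D n : ℕ) (u : Fin n → EuclideanSpace ℝ (Fin D)) :
    (∑ i, (inner ℝ (u i) (u i) : ℝ))^2 ≤ (D : ℝ) * ∑ i, ∑ j, (inner ℝ (u i) (u j) : ℝ)^2 := by
  have hin : ∀ i j, (inner ℝ (u i) (u j) : ℝ) = ∑ k, u i k * u j k := by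
    intro i j
    simp [PiLp.inner_apply, RCLike.inner_apply, mul_comm]
  simp_rw [hin]
  rw [swap_sum]
  have h1 : (∑ i, ∑ k : Fin D, u i k * u i k) = ∑ k : Fin D, ∑ i, u i k * u i k :=
    Finset.sum_comm
  rw [h1]
  have h2 := sq_sum_le_card_mul_sum_sq (s := (univ : Finset (Fin D)))
    (f := fun k => ∑ i, u i k * u i k)
  calc (∑ k : Fin D, ∑ i, u i k * u i k)^2
      ≤ ((univ : Finset (Fin D)).card : ℝ) * ∑ k : Fin D, (∑ i, u i k * u i k)^2 := h2
    _ ≤ (D : ℝ) * ∑ k, ∑ l, (∑ i, u i k * u i l)^2 := by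
        rw [Finset.card_univ, Fintype.card_fin]
        apply mul_le_mul_of_nonneg_left _ (by positivity)
        apply Finset.sum_le_sum
        intro k _
        exact Finset.single_le_sum (f := fun l => (∑ i, u i k * u i l)^2)
          (fun l _ => sq_nonneg _) (Finset.mem_univ k)

lemma snoc_inner (d : ℕ) (x y : EuclideanSpace ℝ (Fin d)) (t : ℝ) :
    (inner ℝ (show EuclideanSpace ℝ (Fin (d+1)) from WithLp.toLp 2 (Fin.snoc x.ofLp t))
      (show EuclideanSpace ℝ (Fin (d+1)) from WithLp.toLp 2 (Fin.snoc y.ofLp t)) : ℝ)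
    = (inner ℝ x y : ℝ) + t * t := by
  simp only [PiLp.inner_apply, RCLike.inner_apply, conj_trivial]
  rw [Fin.sum_univ_castSucc]
  simp [Fin.snoc_castSucc, Fin.snoc_last]


/-- the relative bound for spherical two-distance sets with
`a + b < 0`, where `γ = (2−a−b)/(b−a)` and `γ² > d + 1`. -/
theorem stmt17 (d n : ℕ) (hd : 1 ≤ d)
    (a b : ℝ) (ha : -1 ≤ a) (hab : a < b) (hb : b < 1) (hsum : a + b < 0)
    (γ : ℝ) (hγ : γ = (2 - a - b) / (b - a)) (hγ2 : γ ^ 2 > (d : ℝ) + 1)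
    (v : Fin n → EuclideanSpace ℝ (Fin d))
    (hunit : ∀ i, ‖v i‖ = 1)
    (hinner : ∀ i j, i ≠ j →
      (inner ℝ (v i) (v j) : ℝ) = a ∨ (inner ℝ (v i) (v j) : ℝ) = b) :
    (n : ℝ) ≤ ((d : ℝ) + 1) * (γ ^ 2 - 1) / (γ ^ 2 - ((d : ℝ) + 1)) := by
  have hd1 : (1:ℝ) ≤ (d:ℝ) := by exact_mod_cast hd
  have hpos : (0:ℝ) < γ ^ 2 - ((d:ℝ) + 1) := by linarith
  rcases Nat.eq_zero_or_pos n with h0 | hn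
  · subst h0
    simp only [Nat.cast_zero]
    apply div_nonneg _ hpos.le
    nlinarith
  have hn1 : (1:ℝ) ≤ (n:ℝ) := by exact_mod_cast hn
  -- the lift
  set t : ℝ := Real.sqrt (-(a+b)/2) with ht
  have ht2 : t * t = -(a+b)/2 := Real.mul_self_sqrt (by linarith)
  set s : ℝ := (2 - a - b)/2 with hs
  set β : ℝ := (b - a)/2 with hβ
  have hβ0 : 0 < β := by rw [hβ]; linarith
  have hba : b - a ≠ 0 := sub_ne_zero_of_ne hab.ne'
  have hγβ : γ * β = s := by
    rw [hγ, hβ, hs]; field_simp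
  set w : Fin n → EuclideanSpace ℝ (Fin (d+1)) := fun i => WithLp.toLp 2 (Fin.snoc (v i).ofLp t) with hw
  have hwij : ∀ i j, (inner ℝ (w i) (w j) : ℝ) = (inner ℝ (v i) (v j) : ℝ) + t * t := by
    intro i j; exact snoc_inner d (v i) (v j) t
  have hwdiag : ∀ i, (inner ℝ (w i) (w i) : ℝ) = s := by
    intro i
    rw [hwij, real_inner_self_eq_norm_sq, hunit, ht2, hs]; ring
  have hwoff : ∀ i j, i ≠ j → (inner ℝ (w i) (w j) : ℝ)^2 = β^2 := by
    intro i j hij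
    rw [hwij, ht2]
    rcases hinner i j hij with h | h <;> rw [h] <;> rw [hβ] <;> ring
  have key := frame_bound (d+1) n w
  have hlhs : (∑ i, (inner ℝ (w i) (w i) : ℝ)) = (n:ℝ) * s := by
    simp only [hwdiag]
    simp
  have hrhs : (∑ i, ∑ j, (inner ℝ (w i) (w j) : ℝ)^2)
      = (n:ℝ) * (s^2 + ((n:ℝ) - 1) * β^2) := by
    have : ∀ i : Fin n, (∑ j, (inner ℝ (w i) (w j) : ℝ)^2) = s^2 + ((n:ℝ)-1) * β^2 := by
      intro i
      rw [← Finset.add_sum_erase _ _ (Finset.mem_univ i), hwdiag]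
      congr 1
      rw [Finset.sum_congr rfl (fun j hj => hwoff i j
        (Ne.symm (Finset.ne_of_mem_erase hj))), Finset.sum_const, nsmul_eq_mul]
      congr 1
      rw [Finset.card_erase_of_mem (Finset.mem_univ i), Finset.card_univ,
        Fintype.card_fin, Nat.cast_sub hn, Nat.cast_one]
    rw [Finset.sum_congr rfl (fun i _ => this i), Finset.sum_const, Finset.card_univ,
      Fintype.card_fin, nsmul_eq_mul]
  rw [hlhs, hrhs] at key
  push_cast at key
  -- conclude
  rw [div_eq_mul_inv, ← div_eq_mul_inv, le_div_iff₀ hpos]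
  have hnβ : (0:ℝ) < (n:ℝ) * β^2 := by positivity
  have key2 : ((n:ℝ) * (γ*β))^2 ≤ ((d:ℝ)+1) * ((n:ℝ)*((γ*β)^2 + ((n:ℝ)-1)*β^2)) := by
    rw [hγβ]; exact key
  nlinarith [key2, hnβ, hβ0, hn1]
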